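/- Let α ∈ ℝ and let f = (f₁,f₂) : ℝ² → ℝ² be a C² vector field compactly supported in 𝔻. Then for all x ∈ ℝ²: (D_u D_v L_α¹f)(x) + ((D_u + D_v) L_α f)(x) = (1+α)·u₁·f₁(x) + (1−α)·u₂·f₂(x). -/

import Mathlib

open MeasureTheory

noncomputable section

/-- Euclidean dot product on `ℝ × ℝ`. -/
def dot (a b : ℝ × ℝ) : ℝ := a.1 * b.1 + a.2 * b.2

/-- Rotation by `π/2`: `w⊥ = (−w₂, w₁)`. -/
def perp (w : ℝ × ℝ) : ℝ × ℝ := (-w.2, w.1)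

/-- The open unit disc in `ℝ²`. -/
def disc : Set (ℝ × ℝ) := {p : ℝ × ℝ | p.1 ^ 2 + p.2 ^ 2 < 1}

/-- Directional derivative along a constant vector `w`. -/
def Dc (w : ℝ × ℝ) (F : ℝ × ℝ → ℝ) (x : ℝ × ℝ) : ℝ := fderiv ℝ F x w

/-- The tilde partial derivative `∂̃₁ = −(1+α)u₁u₂∂₁ + (1−α)u₂²∂₂`. -/
def pt1 (α u₁ u₂ : ℝ) (g : ℝ × ℝ → ℝ) (x : ℝ × ℝ) : ℝ :=
  -(1 + α) * u₁ * u₂ * fderiv ℝ g x (1, 0) + (1 - α) * u₂ ^ 2 * fderiv ℝ g x (0, 1)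

/-- The tilde partial derivative `∂̃₂ = (1−α)u₁²∂₁ − (1+α)u₁u₂∂₂`. -/
def pt2 (α u₁ u₂ : ℝ) (g : ℝ × ℝ → ℝ) (x : ℝ × ℝ) : ℝ :=
  (1 - α) * u₁ ^ 2 * fderiv ℝ g x (1, 0) - (1 + α) * u₁ * u₂ * fderiv ℝ g x (0, 1)

/-- Longitudinal V-line transform with weight `α` and constant branch directions. -/
def Lc (α : ℝ) (u v : ℝ × ℝ) (f : ℝ × ℝ → ℝ × ℝ) (x : ℝ × ℝ) : ℝ :=
  (- ∫ t in Set.Ioi (0 : ℝ), dot u (f (x + t • u))) +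
    α * ∫ t in Set.Ioi (0 : ℝ), dot v (f (x + t • v))

/-- Transverse V-line transform with weight `α` and constant branch directions. -/
def Tc (α : ℝ) (u v : ℝ × ℝ) (f : ℝ × ℝ → ℝ × ℝ) (x : ℝ × ℝ) : ℝ :=
  (- ∫ t in Set.Ioi (0 : ℝ), dot (perp u) (f (x + t • u))) +
    α * ∫ t in Set.Ioi (0 : ℝ), dot (perp v) (f (x + t • v))

/-- First moment longitudinal V-line transform with weight `α` and constant branch
directions. -/
def Lc1 (α : ℝ) (u v : ℝ × ℝ) (f : ℝ × ℝ → ℝ × ℝ) (x : ℝ × ℝ) : ℝ :=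
  (- ∫ t in Set.Ioi (0 : ℝ), t * dot u (f (x + t • u))) +
    α * ∫ t in Set.Ioi (0 : ℝ), t * dot v (f (x + t • v))

/-! ### Auxiliary lemmas -/

open Set Metric Filter

set_option synthInstance.maxHeartbeats 1000000
set_option maxHeartbeats 1000000

/-- Points far along a ray leave a compact set, uniformly for `y` near `x`. -/
lemma VLT.exists_bigR {K : Set (ℝ × ℝ)} (hK : IsCompact K) {w : ℝ × ℝ} (hw : w ≠ 0) (x : ℝ × ℝ) :
    ∃ R : ℝ, 0 < R ∧ ∀ y ∈ Metric.ball x 1, ∀ t : ℝ, R ≤ t → y + t • w ∉ K := by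
  obtain ⟨r, hr⟩ := hK.isBounded.subset_closedBall 0
  have hw' : 0 < ‖w‖ := norm_pos_iff.mpr hw
  refine ⟨(max r 0 + ‖x‖ + 2) / ‖w‖, by positivity, ?_⟩
  intro y hy t ht hmem
  have h1 : ‖y + t • w‖ ≤ r := by simpa using hr hmem
  have hyx : ‖y‖ < ‖x‖ + 1 := by
    have h := mem_ball_iff_norm.mp hy
    calc ‖y‖ = ‖(y - x) + x‖ := by ring_nf
    _ ≤ ‖y - x‖ + ‖x‖ := norm_add_le _ _
    _ < ‖x‖ + 1 := by linarith
  have ht0 : (0 : ℝ) ≤ t := le_trans (by positivity) ht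
  have h2 : t * ‖w‖ ≤ ‖y + t • w‖ + ‖y‖ := by
    have h3 : ‖t • w‖ ≤ ‖y + t • w‖ + ‖y‖ := by
      calc ‖t • w‖ = ‖(y + t • w) - y‖ := by congr 1; abel
      _ ≤ ‖y + t • w‖ + ‖y‖ := norm_sub_le _ _
    simpa [norm_smul, abs_of_nonneg ht0] using h3
  rw [div_le_iff₀ hw'] at ht
  have := le_max_left r 0
  nlinarith [hw', mul_le_mul_of_nonneg_right ht (le_of_lt hw')]

lemma VLT.integrableOn_core {F : Type*} [NormedAddCommGroup F] [NormedSpace ℝ F]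
    {h : ℝ × ℝ → F}
    (hh : Continuous h) (hcs : HasCompactSupport h) {w : ℝ × ℝ} (hw : w ≠ 0)
    {φ : ℝ → ℝ} (hφ : Continuous φ) (x : ℝ × ℝ) :
    IntegrableOn (fun t => φ t • h (x + t • w)) (Set.Ioi (0 : ℝ)) := by
  obtain ⟨R, hR0, hR⟩ := VLT.exists_bigR hcs hw x
  have hcont : Continuous fun t : ℝ => φ t • h (x + t • w) :=
    hφ.smul (hh.comp (continuous_const.add (continuous_id.smul continuous_const)))
  have h1 : IntegrableOn (fun t => φ t • h (x + t • w)) (Set.Ioc (0 : ℝ) R) :=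
    hcont.integrableOn_Ioc
  have h2 : IntegrableOn (fun t => φ t • h (x + t • w)) (Set.Ioi R) := by
    refine (integrableOn_zero).congr_fun (fun t htt => ?_) measurableSet_Ioi
    have : x + t • w ∉ tsupport h := hR x (mem_ball_self one_pos) t (le_of_lt htt)
    simp [image_eq_zero_of_notMem_tsupport this]
  refine (h1.union h2).mono_set ?_
  intro t ht
  rcases le_or_gt t R with h | h
  · exact Or.inl ⟨ht, h⟩
  · exact Or.inr h

lemma VLT.integrableOn_core' {h : ℝ × ℝ → ℝ}
    (hh : Continuous h) (hcs : HasCompactSupport h) {w : ℝ × ℝ} (hw : w ≠ 0)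
    {φ : ℝ → ℝ} (hφ : Continuous φ) (x : ℝ × ℝ) :
    IntegrableOn (fun t => φ t * h (x + t • w)) (Set.Ioi (0 : ℝ)) := by
  simpa [smul_eq_mul] using VLT.integrableOn_core hh hcs hw hφ x

/-- Differentiation under the integral sign for weighted shifts of a compactly supported
`C¹` function along a ray. -/
lemma VLT.hasFDerivAt_aux {g : ℝ × ℝ → ℝ} (hg : ContDiff ℝ 1 g) (hcs : HasCompactSupport g)
    {w : ℝ × ℝ} (hw : w ≠ 0) {φ : ℝ → ℝ} (hφ : Continuous φ) (x : ℝ × ℝ) :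
    HasFDerivAt (fun y => ∫ t in Set.Ioi (0 : ℝ), φ t * g (y + t • w))
      (∫ t in Set.Ioi (0 : ℝ), φ t • fderiv ℝ g (x + t • w)) x := by
  obtain ⟨R, hR0, hR⟩ := VLT.exists_bigR (hcs.fderiv ℝ) hw x
  have hgc : Continuous g := hg.continuous
  have hfc : Continuous (fderiv ℝ g) := hg.continuous_fderiv one_ne_zero
  obtain ⟨C, hC⟩ := (hcs.fderiv ℝ).exists_bound_of_continuous hfc
  obtain ⟨M, hM⟩ := (isCompact_Icc (a := (0:ℝ)) (b := R)).exists_bound_of_continuousOn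
    hφ.continuousOn
  have hC0 : 0 ≤ C := le_trans (norm_nonneg _) (hC 0)
  have hM0 : 0 ≤ M := le_trans (norm_nonneg _) (hM 0 ⟨le_rfl, hR0.le⟩)
  have hline : ∀ y : ℝ × ℝ, Continuous fun t : ℝ => y + t • w := fun y =>
    continuous_const.add (continuous_id.smul continuous_const)
  refine hasFDerivAt_integral_of_dominated_of_fderiv_le (s := Metric.ball x 1)
    (bound := (Set.Icc (0:ℝ) R).indicator fun _ => M * C)
    (F' := fun y t => φ t • fderiv ℝ g (y + t • w)) (Metric.ball_mem_nhds x one_pos) ?_ ?_ ?_ ?_ ?_ ?_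
  · exact Eventually.of_forall fun y =>
      (hφ.mul (hgc.comp (hline y))).aestronglyMeasurable
  · exact VLT.integrableOn_core' hgc hcs hw hφ x
  · exact (hφ.smul (hfc.comp (hline x))).aestronglyMeasurable
  · filter_upwards [ae_restrict_mem measurableSet_Ioi] with t ht y hy
    rcases le_or_gt t R with h | h
    · have hmem : t ∈ Set.Icc (0:ℝ) R := ⟨le_of_lt ht, h⟩
      rw [Set.indicator_of_mem hmem]
      refine le_trans (ContinuousLinearMap.opNorm_smul_le _ _) ?_
      exact mul_le_mul (hM t hmem) (hC _) (norm_nonneg _) hM0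
    · rw [Set.indicator_of_notMem (fun hmem : t ∈ Set.Icc (0:ℝ) R => not_lt.mpr hmem.2 h)]
      have hz : fderiv ℝ g (y + t • w) = 0 := by
        by_contra hne
        exact hR y hy t h.le (subset_tsupport _ hne)
      simp [hz]
  · have hbint : Integrable ((Set.Icc (0:ℝ) R).indicator fun _ => M * C) volume := by
      rw [integrable_indicator_iff measurableSet_Icc]
      exact (integrableOn_const_iff).mpr (Or.inr measure_Icc_lt_top)
    exact hbint.restrict
  · filter_upwards [ae_restrict_mem measurableSet_Ioi] with t ht y hy
    have h0 : HasFDerivAt (fun y => g (y + t • w)) (fderiv ℝ g (y + t • w)) y := by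
      have h1 : HasFDerivAt g (fderiv ℝ g (y + t • w)) (y + t • w) :=
        (hg.differentiable one_ne_zero _).hasFDerivAt
      simpa [Function.comp_def] using h1.comp y ((hasFDerivAt_id y).add_const (t • w))
    exact h0.const_mul (φ t)

lemma VLT.tendsto_shift_zero {g : ℝ × ℝ → ℝ} (hcs : HasCompactSupport g)
    {w : ℝ × ℝ} (hw : w ≠ 0) (x : ℝ × ℝ) {φ : ℝ → ℝ} :
    Tendsto (fun t => φ t * g (x + t • w)) atTop (nhds 0) := by
  obtain ⟨R, hR0, hR⟩ := VLT.exists_bigR hcs hw x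
  refine Tendsto.congr' ?_ tendsto_const_nhds
  filter_upwards [eventually_ge_atTop R] with t ht
  have : x + t • w ∉ tsupport g := hR x (mem_ball_self one_pos) t ht
  simp [image_eq_zero_of_notMem_tsupport this]

lemma VLT.hasDerivAt_line {g : ℝ × ℝ → ℝ} (hg : ContDiff ℝ 1 g)
    (w x : ℝ × ℝ) (t : ℝ) :
    HasDerivAt (fun t : ℝ => g (x + t • w)) (fderiv ℝ g (x + t • w) w) t := by
  have h1 : HasFDerivAt g (fderiv ℝ g (x + t • w)) (x + t • w) :=
    (hg.differentiable one_ne_zero _).hasFDerivAt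
  have h2 : HasDerivAt (fun t : ℝ => x + t • w) w t := by
    simpa using ((hasDerivAt_id t).smul_const w).const_add x
  exact h1.comp_hasDerivAt t h2

/-- Fundamental theorem of calculus along the ray: zeroth moment. -/
lemma VLT.FTC0 {g : ℝ × ℝ → ℝ} (hg : ContDiff ℝ 1 g) (hcs : HasCompactSupport g)
    {w : ℝ × ℝ} (hw : w ≠ 0) (x : ℝ × ℝ) :
    ∫ t in Set.Ioi (0 : ℝ), fderiv ℝ g (x + t • w) w = - g x := by
  have hint : IntegrableOn (fun t => fderiv ℝ g (x + t • w) w) (Set.Ioi (0 : ℝ)) := by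
    have := VLT.integrableOn_core' (h := fun y => fderiv ℝ g y w)
      ((hg.continuous_fderiv one_ne_zero).clm_apply continuous_const)
      (hcs.fderiv_apply ℝ w) hw
      (φ := fun _ => (1:ℝ)) continuous_const x
    simpa using this
  have key := integral_Ioi_of_hasDerivAt_of_tendsto' (a := 0) (m := 0)
    (fun t _ => VLT.hasDerivAt_line hg w x t) hint
    (by simpa using VLT.tendsto_shift_zero (φ := fun _ => (1:ℝ)) hcs hw x)
  simpa using key

/-- Fundamental theorem of calculus along the ray: first moment. -/
lemma VLT.FTC1 {g : ℝ × ℝ → ℝ} (hg : ContDiff ℝ 1 g) (hcs : HasCompactSupport g)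
    {w : ℝ × ℝ} (hw : w ≠ 0) (x : ℝ × ℝ) :
    ∫ t in Set.Ioi (0 : ℝ), t * fderiv ℝ g (x + t • w) w
      = - ∫ t in Set.Ioi (0 : ℝ), g (x + t • w) := by
  have hfc : Continuous fun y => fderiv ℝ g y w :=
    (hg.continuous_fderiv one_ne_zero).clm_apply continuous_const
  have hfcs : HasCompactSupport fun y => fderiv ℝ g y w := hcs.fderiv_apply ℝ w
  have hint1 : IntegrableOn (fun t => g (x + t • w)) (Set.Ioi (0 : ℝ)) := by
    simpa using VLT.integrableOn_core' hg.continuous hcs hw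
      (φ := fun _ => (1:ℝ)) continuous_const x
  have hint2 : IntegrableOn (fun t => t * fderiv ℝ g (x + t • w) w) (Set.Ioi (0 : ℝ)) := by
    simpa using VLT.integrableOn_core' (h := fun y => fderiv ℝ g y w) hfc hfcs hw
      (φ := fun t => t) continuous_id x
  have hd : ∀ t ∈ Set.Ici (0:ℝ), HasDerivAt (fun t : ℝ => t * g (x + t • w))
      (g (x + t • w) + t * fderiv ℝ g (x + t • w) w) t := by
    intro t _
    have := (hasDerivAt_id' t).mul (VLT.hasDerivAt_line hg w x t)
    simpa [Pi.mul_def] using this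
  have htend : Tendsto (fun t : ℝ => t * g (x + t • w)) atTop (nhds 0) :=
    VLT.tendsto_shift_zero (φ := fun t => t) hcs hw x
  have key := integral_Ioi_of_hasDerivAt_of_tendsto' (a := 0) (m := 0) hd
    (hint1.add hint2) htend
  rw [integral_add hint1 hint2] at key
  simp at key
  linarith

/-- Evaluating the vector-valued derivative integral at a direction. -/
lemma VLT.integral_clm_apply {g : ℝ × ℝ → ℝ} (hg : ContDiff ℝ 1 g) (hcs : HasCompactSupport g)
    {w : ℝ × ℝ} (hw : w ≠ 0) {φ : ℝ → ℝ} (hφ : Continuous φ) (x w' : ℝ × ℝ) :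
    (∫ t in Set.Ioi (0 : ℝ), φ t • fderiv ℝ g (x + t • w)) w'
      = ∫ t in Set.Ioi (0 : ℝ), φ t * fderiv ℝ g (x + t • w) w' := by
  rw [ContinuousLinearMap.integral_apply
    (VLT.integrableOn_core (hg.continuous_fderiv one_ne_zero) (hcs.fderiv ℝ) hw hφ x) w']
  simp only [ContinuousLinearMap.coe_smul', Pi.smul_apply, smul_eq_mul]

/-- The directional derivative of a two-branch weighted ray transform. -/
lemma VLT.Dc_comb {g₁ g₂ : ℝ × ℝ → ℝ} (hg₁ : ContDiff ℝ 1 g₁) (hc₁ : HasCompactSupport g₁)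
    (hg₂ : ContDiff ℝ 1 g₂) (hc₂ : HasCompactSupport g₂) {w₁ w₂ : ℝ × ℝ}
    (hw₁ : w₁ ≠ 0) (hw₂ : w₂ ≠ 0)
    {φ₁ φ₂ : ℝ → ℝ} (hφ₁ : Continuous φ₁) (hφ₂ : Continuous φ₂) (c : ℝ) (w' x : ℝ × ℝ) :
    Dc w' (fun y => (- ∫ t in Set.Ioi (0:ℝ), φ₁ t * g₁ (y + t • w₁))
        + c * ∫ t in Set.Ioi (0:ℝ), φ₂ t * g₂ (y + t • w₂)) x
      = (- ∫ t in Set.Ioi (0:ℝ), φ₁ t * fderiv ℝ g₁ (x + t • w₁) w')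
        + c * ∫ t in Set.Ioi (0:ℝ), φ₂ t * fderiv ℝ g₂ (x + t • w₂) w' := by
  have h1 := VLT.hasFDerivAt_aux hg₁ hc₁ hw₁ hφ₁ x
  have h2 := VLT.hasFDerivAt_aux hg₂ hc₂ hw₂ hφ₂ x
  have H : HasFDerivAt (fun y => (- ∫ t in Set.Ioi (0:ℝ), φ₁ t * g₁ (y + t • w₁))
        + c * ∫ t in Set.Ioi (0:ℝ), φ₂ t * g₂ (y + t • w₂))
      ((- ∫ t in Set.Ioi (0:ℝ), φ₁ t • fderiv ℝ g₁ (x + t • w₁))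
        + c • ∫ t in Set.Ioi (0:ℝ), φ₂ t • fderiv ℝ g₂ (x + t • w₂)) x :=
    h1.neg.add (h2.const_mul c)
  simp only [Dc]
  rw [H.fderiv]
  rw [ContinuousLinearMap.add_apply, ContinuousLinearMap.neg_apply,
    ContinuousLinearMap.smul_apply]
  rw [VLT.integral_clm_apply hg₁ hc₁ hw₁ hφ₁ x w', VLT.integral_clm_apply hg₂ hc₂ hw₂ hφ₂ x w']
  simp [smul_eq_mul]

theorem stmt18 (α u₁ u₂ : ℝ) (hunit : u₁ ^ 2 + u₂ ^ 2 = 1) (hne : u₁ * u₂ ≠ 0)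
    (f : ℝ × ℝ → ℝ × ℝ) (hf : ContDiff ℝ 2 f)
    (hcs : HasCompactSupport f) (hsupp : tsupport f ⊆ disc) :
    ∀ x, Dc (u₁, u₂) (Dc (-u₁, u₂) (Lc1 α (u₁, u₂) (-u₁, u₂) f)) x +
        (Dc (u₁, u₂) (Lc α (u₁, u₂) (-u₁, u₂) f) x +
          Dc (-u₁, u₂) (Lc α (u₁, u₂) (-u₁, u₂) f) x) =
      (1 + α) * u₁ * (f x).1 + (1 - α) * u₂ * (f x).2 := by
  intro x
  have h1le2 : (1:WithTop ℕ∞) ≤ 2 := by norm_num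
  have hu1 : u₁ ≠ 0 := fun h => hne (by rw [h]; ring)
  have hu : ((u₁, u₂) : ℝ × ℝ) ≠ 0 := fun h => hu1 (congrArg Prod.fst h)
  have hv : ((-u₁, u₂) : ℝ × ℝ) ≠ 0 := fun h => hu1 (neg_eq_zero.mp (congrArg Prod.fst h))
  -- the two branch scalar fields
  have hG1 : ContDiff ℝ 2 (fun y => dot (u₁, u₂) (f y)) :=
    (contDiff_const.mul (contDiff_fst.comp hf)).add (contDiff_const.mul (contDiff_snd.comp hf))
  have hG2 : ContDiff ℝ 2 (fun y => dot (-u₁, u₂) (f y)) :=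
    (contDiff_const.mul (contDiff_fst.comp hf)).add (contDiff_const.mul (contDiff_snd.comp hf))
  have hG11 : ContDiff ℝ 1 (fun y => dot (u₁, u₂) (f y)) := hG1.of_le h1le2
  have hG21 : ContDiff ℝ 1 (fun y => dot (-u₁, u₂) (f y)) := hG2.of_le h1le2
  have hcG1 : HasCompactSupport (fun y => dot (u₁, u₂) (f y)) :=
    hcs.comp_left (g := dot (u₁, u₂)) (by simp [dot])
  have hcG2 : HasCompactSupport (fun y => dot (-u₁, u₂) (f y)) :=
    hcs.comp_left (g := dot (-u₁, u₂)) (by simp [dot])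
  -- the directional derivative of the first field along v
  have hH12 : ContDiff ℝ 1 (fun y => fderiv ℝ (fun p => dot (u₁, u₂) (f p)) y (-u₁, u₂)) :=
    (hG1.fderiv_right (by norm_num)).clm_apply contDiff_const
  have hcH12 : HasCompactSupport
      (fun y => fderiv ℝ (fun p => dot (u₁, u₂) (f p)) y (-u₁, u₂)) :=
    hcG1.fderiv_apply ℝ _
  -- Step 1: the inner directional derivative of Lc1, as a function
  have S1 : Dc (-u₁, u₂) (Lc1 α (u₁, u₂) (-u₁, u₂) f) =
      (fun y => (- ∫ t in Set.Ioi (0:ℝ),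
          t * fderiv ℝ (fun p => dot (u₁, u₂) (f p)) (y + t • ((u₁, u₂) : ℝ × ℝ)) (-u₁, u₂))
        + (-α) * ∫ t in Set.Ioi (0:ℝ),
          (fun _ : ℝ => (1:ℝ)) t * dot (-u₁, u₂) (f (y + t • ((-u₁, u₂) : ℝ × ℝ)))) := by
    funext y
    have h : Dc (-u₁, u₂) (Lc1 α (u₁, u₂) (-u₁, u₂) f) y =
        (- ∫ t in Set.Ioi (0:ℝ),
            t * fderiv ℝ (fun p => dot (u₁, u₂) (f p)) (y + t • ((u₁, u₂) : ℝ × ℝ)) (-u₁, u₂))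
          + α * ∫ t in Set.Ioi (0:ℝ),
            t * fderiv ℝ (fun p => dot (-u₁, u₂) (f p)) (y + t • ((-u₁, u₂) : ℝ × ℝ)) (-u₁, u₂) :=
      VLT.Dc_comb hG11 hcG1 hG21 hcG2 hu hv continuous_id continuous_id α (-u₁, u₂) y
    rw [h, VLT.FTC1 hG21 hcG2 hv y]
    simp only [one_mul]
    ring
  -- Step 2: the second directional derivative of Lc1 at x
  have S2 : Dc (u₁, u₂) (Dc (-u₁, u₂) (Lc1 α (u₁, u₂) (-u₁, u₂) f)) x =
      (∫ t in Set.Ioi (0:ℝ),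
          fderiv ℝ (fun p => dot (u₁, u₂) (f p)) (x + t • ((u₁, u₂) : ℝ × ℝ)) (-u₁, u₂))
        + (-α) * ∫ t in Set.Ioi (0:ℝ),
          fderiv ℝ (fun p => dot (-u₁, u₂) (f p)) (x + t • ((-u₁, u₂) : ℝ × ℝ)) (u₁, u₂) := by
    rw [S1]
    have h : Dc (u₁, u₂) (fun y => (- ∫ t in Set.Ioi (0:ℝ),
          t * fderiv ℝ (fun p => dot (u₁, u₂) (f p)) (y + t • ((u₁, u₂) : ℝ × ℝ)) (-u₁, u₂))
        + (-α) * ∫ t in Set.Ioi (0:ℝ),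
          (fun _ : ℝ => (1:ℝ)) t * dot (-u₁, u₂) (f (y + t • ((-u₁, u₂) : ℝ × ℝ)))) x =
        (- ∫ t in Set.Ioi (0:ℝ),
            t * fderiv ℝ (fun y => fderiv ℝ (fun p => dot (u₁, u₂) (f p)) y (-u₁, u₂))
              (x + t • ((u₁, u₂) : ℝ × ℝ)) (u₁, u₂))
          + (-α) * ∫ t in Set.Ioi (0:ℝ),
            (fun _ : ℝ => (1:ℝ)) t * fderiv ℝ (fun p => dot (-u₁, u₂) (f p))
              (x + t • ((-u₁, u₂) : ℝ × ℝ)) (u₁, u₂) :=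
      VLT.Dc_comb hH12 hcH12 hG21 hcG2 hu hv continuous_id continuous_const (-α) (u₁, u₂) x
    rw [h, VLT.FTC1 hH12 hcH12 hu x]
    simp only [one_mul]
    ring
  -- Step 3: the directional derivative of Lc along u at x
  have eF : Lc α (u₁, u₂) (-u₁, u₂) f =
      (fun y => (- ∫ t in Set.Ioi (0:ℝ),
          (fun _ : ℝ => (1:ℝ)) t * dot (u₁, u₂) (f (y + t • ((u₁, u₂) : ℝ × ℝ))))
        + α * ∫ t in Set.Ioi (0:ℝ),
          (fun _ : ℝ => (1:ℝ)) t * dot (-u₁, u₂) (f (y + t • ((-u₁, u₂) : ℝ × ℝ)))) := by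
    funext y
    simp only [one_mul]
    rfl
  have S3 : Dc (u₁, u₂) (Lc α (u₁, u₂) (-u₁, u₂) f) x =
      dot (u₁, u₂) (f x)
        + α * ∫ t in Set.Ioi (0:ℝ),
          fderiv ℝ (fun p => dot (-u₁, u₂) (f p)) (x + t • ((-u₁, u₂) : ℝ × ℝ)) (u₁, u₂) := by
    rw [eF]
    have h := VLT.Dc_comb hG11 hcG1 hG21 hcG2 hu hv continuous_const continuous_const α
      (u₁, u₂) x (φ₁ := fun _ : ℝ => (1:ℝ)) (φ₂ := fun _ : ℝ => (1:ℝ))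
    rw [h]
    simp only [one_mul]
    rw [VLT.FTC0 hG11 hcG1 hu x]
    ring
  -- Step 4: the directional derivative of Lc along v at x
  have S4 : Dc (-u₁, u₂) (Lc α (u₁, u₂) (-u₁, u₂) f) x =
      (- ∫ t in Set.Ioi (0:ℝ),
          fderiv ℝ (fun p => dot (u₁, u₂) (f p)) (x + t • ((u₁, u₂) : ℝ × ℝ)) (-u₁, u₂))
        - α * dot (-u₁, u₂) (f x) := by
    rw [eF]
    have h := VLT.Dc_comb hG11 hcG1 hG21 hcG2 hu hv continuous_const continuous_const α
      (-u₁, u₂) x (φ₁ := fun _ : ℝ => (1:ℝ)) (φ₂ := fun _ : ℝ => (1:ℝ))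
    rw [h]
    simp only [one_mul]
    rw [VLT.FTC0 hG21 hcG2 hv x]
    ring
  rw [S2, S3, S4]
  simp only [dot]
  ring
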